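/- arXiv:1205.5625 — 9 statements merged into one kernel-verified Lean document; each statement's English description precedes it below -/
import Mathlib

section
/- Let X = [0,1) ∪ {x,y} be the poset extending the usual order on [0,1) by declaring x and y both greater than every element of [0,1) and incomparable with each other. Then X has a smallest element, every down-set I_τ = {σ : σ ≤ τ} is order-isomorphic to a real interval, but the subset {x,y} has no infimum in X. -/
/-- The poset `X = [0,1) ∪ {x,y}`. -/
inductive TreeEx where
  | of (r : Set.Ico (0:ℝ) 1)
  | x
  | y

namespace TreeEx

/-- The order on `X`: the usual order on `[0,1)`, with `x` and `y` above every
element of `[0,1)` and incomparable with each other. -/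
def le : TreeEx → TreeEx → Prop
  | of r, of s => (r : ℝ) ≤ (s : ℝ)
  | of _, x => True
  | of _, y => True
  | x, x => True
  | y, y => True
  | _, _ => False

instance : PartialOrder TreeEx where
  le := le
  le_refl t := by cases t <;> simp [le]
  le_trans a b c hab hbc := by
    cases a <;> cases b <;> cases c <;> simp_all [le] <;> exact le_trans hab hbc
  le_antisymm a b hab hba := by
    cases a <;> cases b <;> simp_all [le]
    exact Subtype.ext (le_antisymm hab hba)

end TreeEx

/-- `X = [0,1) ∪ {x,y}` has a smallest element, every down-set is
order-isomorphic to a real interval, but `{x,y}` has no infimum in `X`. -/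
theorem treeEx_no_infimum :
    (∃ τ₀ : TreeEx, ∀ t, τ₀ ≤ t) ∧
    (∀ τ : TreeEx, ∃ s : Set ℝ, s.OrdConnected ∧
      Nonempty ({σ : TreeEx // σ ≤ τ} ≃o s)) ∧
    ¬ ∃ t : TreeEx, IsGLB {TreeEx.x, TreeEx.y} t := by
  refine ⟨⟨.of ⟨0, le_refl 0, one_pos⟩, fun t => ?_⟩, fun τ => ?_, ?_⟩
  · cases t with
    | of s => exact s.2.1
    | x => trivial
    | y => trivial
  · cases τ with
    | of r =>
      refine ⟨Set.Icc (0:ℝ) r, Set.ordConnected_Icc, ⟨{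
        toFun := fun σ => match σ with
          | ⟨.of u, h⟩ => ⟨(u : ℝ), u.2.1, h⟩
        invFun := fun v =>
          ⟨.of ⟨(v : ℝ), v.2.1, lt_of_le_of_lt v.2.2 r.2.2⟩, v.2.2⟩
        left_inv := fun σ => by
          obtain ⟨σ, h⟩ := σ
          cases σ with
          | of u => rfl
          | x => exact absurd h (by simp [LE.le, TreeEx.le])
          | y => exact absurd h (by simp [LE.le, TreeEx.le])
        right_inv := fun v => rfl
        map_rel_iff' := by
          rintro ⟨σ, h⟩ ⟨σ', h'⟩
          cases σ with
          | x => exact h.elim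
          | y => exact h.elim
          | of u =>
            cases σ' with
            | x => exact h'.elim
            | y => exact h'.elim
            | of u' => exact Iff.rfl }⟩⟩
    | x =>
      refine ⟨Set.Icc (0:ℝ) 1, Set.ordConnected_Icc, ⟨{
        toFun := fun σ => match σ with
          | ⟨.of u, _⟩ => ⟨(u : ℝ), u.2.1, u.2.2.le⟩
          | ⟨.x, _⟩ => ⟨1, zero_le_one, le_refl 1⟩
          | ⟨.y, h⟩ => absurd h (by simp [LE.le, TreeEx.le])
        invFun := fun v =>
          if h : (v : ℝ) < 1 then ⟨.of ⟨(v : ℝ), v.2.1, h⟩, trivial⟩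
          else ⟨.x, le_refl _⟩
        left_inv := fun σ => by
          obtain ⟨σ, h⟩ := σ
          cases σ with
          | of u => simp [u.2.2]
          | x => simp
          | y => exact absurd h (by simp [LE.le, TreeEx.le])
        right_inv := fun v => by
          by_cases h : (v : ℝ) < 1
          · simp [h]
          · have hv : (v : ℝ) = 1 := le_antisymm v.2.2 (not_lt.1 h)
            simp only [dif_neg h]
            exact Subtype.ext hv.symm
        map_rel_iff' := by
          rintro ⟨σ, h⟩ ⟨σ', h'⟩
          cases σ with
          | y => exact h.elim
          | of u =>
            cases σ' with
            | y => exact h'.elim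
            | of u' => exact Iff.rfl
            | x => exact iff_of_true u.2.2.le trivial
          | x =>
            cases σ' with
            | y => exact h'.elim
            | of u' => exact iff_of_false (not_le.2 u'.2.2) (fun hh => hh)
            | x => exact iff_of_true le_rfl trivial }⟩⟩
    | y =>
      refine ⟨Set.Icc (0:ℝ) 1, Set.ordConnected_Icc, ⟨{
        toFun := fun σ => match σ with
          | ⟨.of u, _⟩ => ⟨(u : ℝ), u.2.1, u.2.2.le⟩
          | ⟨.y, _⟩ => ⟨1, zero_le_one, le_refl 1⟩
          | ⟨.x, h⟩ => absurd h (by simp [LE.le, TreeEx.le])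
        invFun := fun v =>
          if h : (v : ℝ) < 1 then ⟨.of ⟨(v : ℝ), v.2.1, h⟩, trivial⟩
          else ⟨.y, le_refl _⟩
        left_inv := fun σ => by
          obtain ⟨σ, h⟩ := σ
          cases σ with
          | of u => simp [u.2.2]
          | y => simp
          | x => exact absurd h (by simp [LE.le, TreeEx.le])
        right_inv := fun v => by
          by_cases h : (v : ℝ) < 1
          · simp [h]
          · have hv : (v : ℝ) = 1 := le_antisymm v.2.2 (not_lt.1 h)
            simp only [dif_neg h]
            exact Subtype.ext hv.symm
        map_rel_iff' := by
          rintro ⟨σ, h⟩ ⟨σ', h'⟩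
          cases σ with
          | x => exact h.elim
          | of u =>
            cases σ' with
            | x => exact h'.elim
            | of u' => exact Iff.rfl
            | y => exact iff_of_true u.2.2.le trivial
          | y =>
            cases σ' with
            | x => exact h'.elim
            | of u' => exact iff_of_false (not_le.2 u'.2.2) (fun hh => hh)
            | y => exact iff_of_true le_rfl trivial }⟩⟩
  · rintro ⟨t, hlb, hglb⟩
    have hx : t ≤ TreeEx.x := hlb (by simp)
    have hy : t ≤ TreeEx.y := hlb (by simp [Set.mem_insert_iff])
    cases t with
    | x => exact hy
    | y => exact hx
    | of r =>
      set m : ℝ := ((r : ℝ) + 1) / 2 with hm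
      have hrm : (r : ℝ) < m := by
        have := r.2.2; simp [hm]; linarith
      have hm1 : m < 1 := by
        have := r.2.2; simp [hm]; linarith
      have hm0 : (0:ℝ) ≤ m := le_trans r.2.1 hrm.le
      have hmem : TreeEx.of ⟨m, hm0, hm1⟩ ∈ lowerBounds {TreeEx.x, TreeEx.y} := by
        rintro s (rfl | rfl) <;> trivial
      have : m ≤ (r : ℝ) := hglb hmem
      linarith
end

section
/- Let (T, ≤) be a poset with a smallest element τ₀ such that every set I_τ = {σ ∈ T : σ ≤ τ} is order-isomorphic to a real interval. If every pair {τ,σ} ⊆ T has an infimum in T, then every non-empty subset S ⊆ T has an infimum in T. -/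
/-- in a poset with a smallest element whose down-sets are
order-isomorphic to real intervals, if every pair has an infimum then every
non-empty subset has an infimum. -/
theorem pairwise_infima_imply_infima {T : Type*} [PartialOrder T]
    (τ₀ : T) (hroot : ∀ t : T, τ₀ ≤ t)
    (hI : ∀ τ : T, ∃ s : Set ℝ, s.OrdConnected ∧
      Nonempty ({σ : T // σ ≤ τ} ≃o s))
    (hpair : ∀ a b : T, ∃ t : T, IsGLB {a, b} t) :
    ∀ S : Set T, S.Nonempty → ∃ t : T, IsGLB S t := by
  intro S hS
  obtain ⟨s₀, hs₀⟩ := hS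
  obtain ⟨I, hconn, ⟨f⟩⟩ := hI s₀
  -- lower bounds of S, viewed inside the down-set of s₀
  set L : Set {σ : T // σ ≤ s₀} := {l | ∀ x ∈ S, l.1 ≤ x} with hLdef
  have hτ₀L : (⟨τ₀, hroot s₀⟩ : {σ : T // σ ≤ s₀}) ∈ L := fun x _ => hroot x
  set A : Set ℝ := (fun l => (f l : ℝ)) '' L with hAdef
  have hAne : A.Nonempty := ⟨_, ⟨_, hτ₀L, rfl⟩⟩
  have hAbdd : BddAbove A := by
    refine ⟨(f ⟨s₀, le_refl _⟩ : ℝ), ?_⟩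
    rintro _ ⟨l, hl, rfl⟩
    exact Subtype.coe_le_coe.mpr (f.le_iff_le.mpr (Subtype.coe_le_coe.mp l.2))
  set r : ℝ := sSup A with hrdef
  have hrlo : (f ⟨τ₀, hroot s₀⟩ : ℝ) ≤ r := le_csSup hAbdd ⟨_, hτ₀L, rfl⟩
  have hrhi : r ≤ (f ⟨s₀, le_refl _⟩ : ℝ) := by
    apply csSup_le hAne
    rintro _ ⟨l, hl, rfl⟩
    exact Subtype.coe_le_coe.mpr (f.le_iff_le.mpr (Subtype.coe_le_coe.mp l.2))
  have hrI : r ∈ I := hconn.out (f ⟨τ₀, hroot s₀⟩).2 (f ⟨s₀, le_refl _⟩).2 ⟨hrlo, hrhi⟩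
  set tt : {σ : T // σ ≤ s₀} := f.symm ⟨r, hrI⟩ with httdef
  -- every lower bound of S is ≤ tt
  have hle_tt : ∀ l ∈ L, l ≤ tt := by
    intro l hl
    have : (f l : ℝ) ≤ r := le_csSup hAbdd ⟨l, hl, rfl⟩
    have h2 : f l ≤ (⟨r, hrI⟩ : I) := Subtype.coe_le_coe.mp this
    rw [httdef, ← f.le_iff_le, f.apply_symm_apply]
    exact h2
  -- tt is a lower bound of S
  have htlb : ∀ x ∈ S, tt.1 ≤ x := by
    intro x hx
    obtain ⟨m, hm⟩ := hpair tt.1 x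
    have hmt : m ≤ tt.1 := hm.1 (by simp)
    have hmx : m ≤ x := hm.1 (by simp)
    have hms₀ : m ≤ s₀ := le_trans hmt tt.2
    have hmub : ∀ l ∈ L, l ≤ (⟨m, hms₀⟩ : {σ : T // σ ≤ s₀}) := by
      intro l hl
      have hlt : l.1 ≤ tt.1 := hle_tt l hl
      have hlx : l.1 ≤ x := hl x hx
      have : l.1 ≤ m := hm.2 (by rintro y (rfl | rfl) <;> [exact hlt; exact hlx])
      exact Subtype.coe_le_coe.mp this
    have : r ≤ (f ⟨m, hms₀⟩ : ℝ) := by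
      apply csSup_le hAne
      rintro _ ⟨l, hl, rfl⟩
      exact Subtype.coe_le_coe.mpr (f.le_iff_le.mpr (hmub l hl))
    have h2 : (⟨r, hrI⟩ : I) ≤ f ⟨m, hms₀⟩ := this
    have h3 : tt ≤ ⟨m, hms₀⟩ := by
      rw [httdef, ← f.le_iff_le, f.apply_symm_apply]; exact h2
    have : tt.1 ≤ m := Subtype.coe_le_coe.mpr h3
    exact le_trans this hmx
  refine ⟨tt.1, ?_, ?_⟩
  · exact fun x hx => htlb x hx
  · intro b hb
    have hbs₀ : b ≤ s₀ := hb hs₀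
    have : (⟨b, hbs₀⟩ : {σ : T // σ ≤ s₀}) ∈ L := fun x hx => hb hx
    exact Subtype.coe_le_coe.mpr (hle_tt _ this)
end

section
/- Let (R,m) be a two-dimensional regular local ring with regular system of parameters (x,y), and let ν be a centered valuation on R. If (a₁,b₁), (a₂,b₂) ∈ S satisfy ν(a₁x + b₁y) > ν(m) and ν(a₂x + b₂y) > ν(m), then (a₁,b₁) ~ (a₂,b₂), i.e., a₁b₂ − a₂b₁ ∈ m. -/
open IsLocalRing

/-- for a centered valuation `ν` on a two-dimensional regular local
ring with regular system of parameters `(x,y)`, if `(a₁,b₁), (a₂,b₂) ∈ S` satisfy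
`ν(a₁x + b₁y) > ν(m)` and `ν(a₂x + b₂y) > ν(m)`, then `a₁b₂ - a₂b₁ ∈ m`. -/
theorem both_excess_implies_equiv {R : Type*} [CommRing R] [IsDomain R]
    [IsLocalRing R] [IsNoetherianRing R]
    (hdim : ringKrullDim R = 2)
    (x y : R) (hxy : maximalIdeal R = Ideal.span {x, y})
    (v : R → WithTop ℝ)
    (hmul : ∀ a b : R, v (a * b) = v a + v b)
    (hadd : ∀ a b : R, min (v a) (v b) ≤ v (a + b))
    (hone : v 1 = 0) (hzero : v 0 = ⊤)
    (hnonneg : ∀ a : R, 0 ≤ v a)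
    (hcent : ∀ a ∈ maximalIdeal R, 0 < v a)
    (vm : WithTop ℝ)
    (hvm : IsLeast {c | ∃ φ ∈ maximalIdeal R, v φ = c} vm)
    (a₁ b₁ a₂ b₂ : R)
    (ha₁ : IsUnit a₁ ∨ a₁ = 0) (hb₁ : IsUnit b₁ ∨ b₁ = 0)
    (ha₂ : IsUnit a₂ ∨ a₂ = 0) (hb₂ : IsUnit b₂ ∨ b₂ = 0)
    (hne₁ : ¬(a₁ = 0 ∧ b₁ = 0)) (hne₂ : ¬(a₂ = 0 ∧ b₂ = 0))
    (hv₁ : vm < v (a₁ * x + b₁ * y)) (hv₂ : vm < v (a₂ * x + b₂ * y)) :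
    a₁ * b₂ - a₂ * b₁ ∈ maximalIdeal R := by
  by_contra hD
  set D := a₁ * b₂ - a₂ * b₁ with hDdef
  have hDu : IsUnit D := by
    by_contra h
    exact hD (IsLocalRing.mem_maximalIdeal D |>.mpr h)
  -- v of a unit is 0
  have hunit0 : ∀ u : R, IsUnit u → v u = 0 := by
    intro u hu
    obtain ⟨w, hw⟩ := hu
    have h1 : v (u * ↑w⁻¹) = 0 := by
      rw [← hw]
      simp only [Units.mul_inv, hone]
    rw [hmul] at h1
    rcases (add_eq_zero_iff_of_nonneg (hnonneg u) (hnonneg _)).mp h1 with ⟨h2, _⟩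
    exact h2
  have hvD : v D = 0 := hunit0 D hDu
  -- v(-z) = v z
  have hneg1 : v (-1) = 0 := by
    have h1 : v ((-1 : R) * (-1)) = v (-1) + v (-1) := hmul _ _
    rw [show ((-1 : R) * (-1)) = 1 by ring, hone] at h1
    rcases (add_eq_zero_iff_of_nonneg (hnonneg _) (hnonneg _)).mp h1.symm with ⟨h2, _⟩
    exact h2
  have hvneg : ∀ z : R, v (-z) = v z := by
    intro z
    have := hmul (-1) z
    rw [show (-1 : R) * z = -z by ring, hneg1, zero_add] at this
    exact this
  set L₁ := a₁ * x + b₁ * y with hL₁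
  set L₂ := a₂ * x + b₂ * y with hL₂
  -- v x > vm
  have hcomb : ∀ c d z : R, vm < v L₁ → vm < v L₂ → c * L₁ + d * L₂ = z → vm < v z := by
    intro c d z h1 h2 hz
    have hle : min (v (c * L₁)) (v (d * L₂)) ≤ v z := by
      rw [← hz]; exact hadd _ _
    have hc : vm < v (c * L₁) := by
      rw [hmul]
      calc vm < v L₁ := h1
        _ = 0 + v L₁ := (zero_add _).symm
        _ ≤ v c + v L₁ := add_le_add_left (hnonneg c) _
    have hd : vm < v (d * L₂) := by
      rw [hmul]
      calc vm < v L₂ := h2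
        _ = 0 + v L₂ := (zero_add _).symm
        _ ≤ v d + v L₂ := add_le_add_left (hnonneg d) _
    exact lt_of_lt_of_le (lt_min hc hd) hle
  have hvx : vm < v x := by
    have hz : b₂ * L₁ + (-b₁) * L₂ = D * x := by rw [hL₁, hL₂, hDdef]; ring
    have := hcomb b₂ (-b₁) (D * x) hv₁ hv₂ hz
    rwa [hmul, hvD, zero_add] at this
  have hvy : vm < v y := by
    have hz : (-a₂) * L₁ + a₁ * L₂ = D * y := by rw [hL₁, hL₂, hDdef]; ring
    have := hcomb (-a₂) a₁ (D * y) hv₁ hv₂ hz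
    rwa [hmul, hvD, zero_add] at this
  -- every element of m has value > vm, contradicting IsLeast
  obtain ⟨⟨φ, hφm, hφv⟩, _⟩ := hvm
  rw [hxy, Ideal.mem_span_pair] at hφm
  obtain ⟨c, d, hcd⟩ := hφm
  have : vm < v φ := by
    have hle : min (v (c * x)) (v (d * y)) ≤ v φ := by
      rw [← hcd]; exact hadd _ _
    have hc : vm < v (c * x) := by
      rw [hmul]
      calc vm < v x := hvx
        _ = 0 + v x := (zero_add _).symm
        _ ≤ v c + v x := add_le_add_left (hnonneg c) _
    have hd : vm < v (d * y) := by
      rw [hmul]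
      calc vm < v y := hvy
        _ = 0 + v y := (zero_add _).symm
        _ ≤ v d + v y := add_le_add_left (hnonneg d) _
    exact lt_of_lt_of_le (lt_min hc hd) hle
  rw [hφv] at this
  exact lt_irrefl vm this
end

section
/- Let (R,m) be a two-dimensional regular local ring with regular system of parameters (x,y). Given two centered valuations ν, μ: R → ℝ ∪ {∞}, there exist a, b ∈ R^× ∪ {0}, not both zero, such that ν(ax + by) = ν(m) and μ(ax + by) = μ(m). -/
section Aux
variable {R : Type*} [CommRing R]

lemma val_neg_one (v : R → WithTop ℝ)
    (hmul : ∀ a b : R, v (a * b) = v a + v b) (hone : v 1 = 0)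
    (hnonneg : ∀ a : R, 0 ≤ v a) : v (-1 : R) = 0 := by
  have h : v (-1 : R) + v (-1 : R) = 0 := by
    rw [← hmul]; simpa using hone
  cases h' : v (-1 : R) with
  | top => rw [h'] at h; simp at h
  | coe r =>
    rw [h'] at h
    have hr : r + r = 0 := by exact_mod_cast h
    have : r = 0 := by linarith
    simp [this]

lemma val_neg (v : R → WithTop ℝ)
    (hmul : ∀ a b : R, v (a * b) = v a + v b) (hone : v 1 = 0)
    (hnonneg : ∀ a : R, 0 ≤ v a) (a : R) : v (-a) = v a := by
  have : v (-1 * a) = v (-1) + v a := hmul _ _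
  rw [val_neg_one v hmul hone hnonneg] at this
  simpa using this

lemma val_add_eq_of_lt (v : R → WithTop ℝ)
    (hmul : ∀ a b : R, v (a * b) = v a + v b)
    (hadd : ∀ a b : R, min (v a) (v b) ≤ v (a + b))
    (hone : v 1 = 0) (hnonneg : ∀ a : R, 0 ≤ v a)
    {x y : R} (hlt : v x < v y) : v (x + y) = v x := by
  refine le_antisymm ?_ ?_
  · by_contra hc
    push_neg at hc
    have key : min (v (x + y)) (v (-y)) ≤ v x := by
      have := hadd (x + y) (-y)
      simpa using this
    rw [val_neg v hmul hone hnonneg] at key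
    exact absurd key (not_le.mpr (lt_min hc hlt))
  · have := hadd x y
    rwa [min_eq_left hlt.le] at this

lemma two_good (v : R → WithTop ℝ)
    (hmul : ∀ a b : R, v (a * b) = v a + v b)
    (hadd : ∀ a b : R, min (v a) (v b) ≤ v (a + b))
    (hone : v 1 = 0) (hnonneg : ∀ a : R, 0 ≤ v a) (x y : R) :
    (v x = min (v x) (v y) ∧ v (x + y) = min (v x) (v y)) ∨
    (v y = min (v x) (v y) ∧ v (x + y) = min (v x) (v y)) ∨
    (v x = min (v x) (v y) ∧ v y = min (v x) (v y)) := by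
  rcases lt_trichotomy (v x) (v y) with h | h | h
  · exact Or.inl ⟨(min_eq_left h.le).symm,
      by rw [val_add_eq_of_lt v hmul hadd hone hnonneg h, min_eq_left h.le]⟩
  · exact Or.inr (Or.inr ⟨(min_eq_left h.le).symm, by rw [← h, min_self]⟩)
  · refine Or.inr (Or.inl ⟨(min_eq_right h.le).symm, ?_⟩)
    rw [add_comm, val_add_eq_of_lt v hmul hadd hone hnonneg h, min_eq_right h.le]

lemma vm_eq_min {R : Type*} [CommRing R] [IsLocalRing R]
    (x y : R) (hxy : IsLocalRing.maximalIdeal R = Ideal.span {x, y})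
    (v : R → WithTop ℝ)
    (hmul : ∀ a b : R, v (a * b) = v a + v b)
    (hadd : ∀ a b : R, min (v a) (v b) ≤ v (a + b))
    (hnonneg : ∀ a : R, 0 ≤ v a)
    (vm : WithTop ℝ)
    (hvm : IsLeast {c | ∃ φ ∈ IsLocalRing.maximalIdeal R, v φ = c} vm) :
    vm = min (v x) (v y) := by
  have hx : x ∈ IsLocalRing.maximalIdeal R := by
    rw [hxy]; exact Ideal.subset_span (Set.mem_insert _ _)
  have hy : y ∈ IsLocalRing.maximalIdeal R := by
    rw [hxy]; exact Ideal.subset_span (Set.mem_insert_of_mem _ rfl)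
  refine le_antisymm (le_min (hvm.2 ⟨x, hx, rfl⟩) (hvm.2 ⟨y, hy, rfl⟩)) ?_
  obtain ⟨φ, hφ, hφv⟩ := hvm.1
  rw [hxy, Ideal.mem_span_pair] at hφ
  obtain ⟨a, b, hab⟩ := hφ
  have h1 : v x ≤ v (a * x) := by
    rw [hmul]
    calc v x = 0 + v x := (zero_add _).symm
    _ ≤ v a + v x := add_le_add_left (hnonneg a) _
  have h2 : v y ≤ v (b * y) := by
    rw [hmul]
    calc v y = 0 + v y := (zero_add _).symm
    _ ≤ v b + v y := add_le_add_left (hnonneg b) _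
  calc min (v x) (v y) ≤ min (v (a * x)) (v (b * y)) := min_le_min h1 h2
  _ ≤ v (a * x + b * y) := hadd _ _
  _ = vm := by rw [hab, hφv]

end Aux

open IsLocalRing

/-- given two centered valuations `ν, μ` on a two-dimensional
regular local ring with regular system of parameters `(x,y)`, there exist
`a, b ∈ R^× ∪ {0}`, not both zero, with `ν(ax+by) = ν(m)` and `μ(ax+by) = μ(m)`. -/
theorem exists_common_minimizing_element {R : Type*} [CommRing R] [IsDomain R]
    [IsLocalRing R] [IsNoetherianRing R]
    (hdim : ringKrullDim R = 2)
    (x y : R) (hxy : maximalIdeal R = Ideal.span {x, y})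
    (v w : R → WithTop ℝ)
    (hvmul : ∀ a b : R, v (a * b) = v a + v b)
    (hvadd : ∀ a b : R, min (v a) (v b) ≤ v (a + b))
    (hvone : v 1 = 0) (hvzero : v 0 = ⊤)
    (hvnonneg : ∀ a : R, 0 ≤ v a)
    (hvcent : ∀ a ∈ maximalIdeal R, 0 < v a)
    (hwmul : ∀ a b : R, w (a * b) = w a + w b)
    (hwadd : ∀ a b : R, min (w a) (w b) ≤ w (a + b))
    (hwone : w 1 = 0) (hwzero : w 0 = ⊤)
    (hwnonneg : ∀ a : R, 0 ≤ w a)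
    (hwcent : ∀ a ∈ maximalIdeal R, 0 < w a)
    (vm wm : WithTop ℝ)
    (hvm : IsLeast {c | ∃ φ ∈ maximalIdeal R, v φ = c} vm)
    (hwm : IsLeast {c | ∃ φ ∈ maximalIdeal R, w φ = c} wm) :
    ∃ a b : R, (IsUnit a ∨ a = 0) ∧ (IsUnit b ∨ b = 0) ∧ ¬(a = 0 ∧ b = 0) ∧
      v (a * x + b * y) = vm ∧ w (a * x + b * y) = wm := by
  have hvm' : vm = min (v x) (v y) := vm_eq_min x y hxy v hvmul hvadd hvnonneg vm hvm
  have hwm' : wm = min (w x) (w y) := vm_eq_min x y hxy w hwmul hwadd hwnonneg wm hwm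
  have HV := two_good v hvmul hvadd hvone hvnonneg x y
  have HW := two_good w hwmul hwadd hwone hwnonneg x y
  rcases HV with ⟨hv1, hv2⟩ | ⟨hv1, hv2⟩ | ⟨hv1, hv2⟩ <;>
    rcases HW with ⟨hw1, hw2⟩ | ⟨hw1, hw2⟩ | ⟨hw1, hw2⟩
  · exact ⟨1, 1, Or.inl isUnit_one, Or.inl isUnit_one, by simp,
      by rw [hvm']; simpa using hv2, by rw [hwm']; simpa using hw2⟩
  · exact ⟨1, 1, Or.inl isUnit_one, Or.inl isUnit_one, by simp,
      by rw [hvm']; simpa using hv2, by rw [hwm']; simpa using hw2⟩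
  · exact ⟨1, 0, Or.inl isUnit_one, Or.inr rfl, by simp,
      by rw [hvm']; simpa using hv1, by rw [hwm']; simpa using hw1⟩
  · exact ⟨1, 1, Or.inl isUnit_one, Or.inl isUnit_one, by simp,
      by rw [hvm']; simpa using hv2, by rw [hwm']; simpa using hw2⟩
  · exact ⟨1, 1, Or.inl isUnit_one, Or.inl isUnit_one, by simp,
      by rw [hvm']; simpa using hv2, by rw [hwm']; simpa using hw2⟩
  · exact ⟨0, 1, Or.inr rfl, Or.inl isUnit_one, by simp,
      by rw [hvm']; simpa using hv1, by rw [hwm']; simpa using hw2⟩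
  · exact ⟨1, 0, Or.inl isUnit_one, Or.inr rfl, by simp,
      by rw [hvm']; simpa using hv1, by rw [hwm']; simpa using hw1⟩
  · exact ⟨0, 1, Or.inr rfl, Or.inl isUnit_one, by simp,
      by rw [hvm']; simpa using hv2, by rw [hwm']; simpa using hw1⟩
  · exact ⟨1, 0, Or.inl isUnit_one, Or.inr rfl, by simp,
      by rw [hvm']; simpa using hv1, by rw [hwm']; simpa using hw1⟩
end

section
/- Let (T, ≤) be a rooted non-metric tree (with infima of pairs). For τ, σ, α ∈ T with α ≠ τ ≠ σ: α ∉ [σ]_τ (the tangent-vector class of σ at τ) if and only if τ ∈ [α, σ], the closed segment connecting α and σ. -/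
variable {T : Type*} [PartialOrder T]

/-- The closed segment `[a,b] = {γ | a∧b ≤ γ ≤ a or a∧b ≤ γ ≤ b}`, where
`wedge a b` is the infimum `a∧b`. -/
def seg (wedge : T → T → T) (a b : T) : Set T :=
  {γ | (wedge a b ≤ γ ∧ γ ≤ a) ∨ (wedge a b ≤ γ ∧ γ ≤ b)}

/-- The half-open segment `]a,b] = [a,b] \ {a}`. -/
def segOC (wedge : T → T → T) (a b : T) : Set T :=
  seg wedge a b \ {a}

/-- The tangent relation at `τ`: `a ~_τ b ↔ ]τ,a] ∩ ]τ,b] ≠ ∅`. -/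
def tangRel (wedge : T → T → T) (τ a b : T) : Prop :=
  (segOC wedge τ a ∩ segOC wedge τ b).Nonempty

/-- The tangent-vector class `[σ]_τ` of `σ` at `τ`, a subset of `T \ {τ}`. -/
def tangClass (wedge : T → T → T) (τ σ : T) : Set T :=
  {α | α ≠ τ ∧ tangRel wedge τ σ α}

/-- in a rooted non-metric tree, for `α ≠ τ ≠ σ`, the point `α`
is not in the tangent class `[σ]_τ` iff `τ` lies on the closed segment `[α,σ]`. -/
theorem not_mem_tangClass_iff_mem_seg
    -- (T1): a root
    (τ₀ : T) (hroot : ∀ t : T, τ₀ ≤ t)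
    -- (T2): down-sets are order-isomorphic to real intervals
    (hI : ∀ τ : T, ∃ s : Set ℝ, s.OrdConnected ∧
      Nonempty ({σ : T // σ ≤ τ} ≃o s))
    -- (T3): totally ordered convex subsets are order-isomorphic to real intervals
    (hT3 : ∀ C : Set T, IsChain (· ≤ ·) C → C.OrdConnected →
      ∃ s : Set ℝ, s.OrdConnected ∧ Nonempty (C ≃o s))
    -- (T4'): pairwise infima, realized by `wedge`
    (wedge : T → T → T) (hwedge : ∀ a b : T, IsGLB {a, b} (wedge a b))
    (τ σ α : T) (hα : α ≠ τ) (hσ : σ ≠ τ) :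
    α ∉ tangClass wedge τ σ ↔ τ ∈ seg wedge α σ := by

  have wle1 : ∀ a b : T, wedge a b ≤ a := fun a b => (hwedge a b).1 (Set.mem_insert a {b})
  have wle2 : ∀ a b : T, wedge a b ≤ b := fun a b =>
    (hwedge a b).1 (Set.mem_insert_of_mem a rfl)
  have wglb : ∀ a b c : T, c ≤ a → c ≤ b → c ≤ wedge a b := fun a b c h1 h2 =>
    (hwedge a b).2 (by rintro x (rfl | rfl) <;> assumption)
  have chain : ∀ a b c : T, a ≤ c → b ≤ c → a ≤ b ∨ b ≤ a := by
    intro a b c ha hb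
    obtain ⟨s, -, ⟨e⟩⟩ := hI c
    rcases le_total (e ⟨a, ha⟩) (e ⟨b, hb⟩) with h | h
    · exact Or.inl (Subtype.mk_le_mk.mp (e.le_iff_le.mp h))
    · exact Or.inr (Subtype.mk_le_mk.mp (e.le_iff_le.mp h))
  constructor
  · intro h
    have hemp : ¬ tangRel wedge τ σ α := fun ht => h ⟨hα, ht⟩
    by_cases hτσ : τ ≤ σ
    · by_cases hτα : τ ≤ α
      · by_cases hm : wedge σ α = τ
        · refine Or.inr ⟨?_, hτσ⟩
          have h1 : wedge α σ ≤ wedge σ α := wglb σ α _ (wle2 α σ) (wle1 α σ)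
          rw [hm] at h1; exact h1
        · exfalso; apply hemp
          have hτm : τ ≤ wedge σ α := wglb σ α τ hτσ hτα
          exact ⟨wedge σ α,
            ⟨Or.inr ⟨(wle1 τ σ).trans hτm, wle1 σ α⟩, hm⟩,
            ⟨Or.inr ⟨(wle1 τ α).trans hτm, wle2 σ α⟩, hm⟩⟩
      · rcases chain (wedge α σ) τ σ (wle2 α σ) hτσ with h1 | h1
        · exact Or.inr ⟨h1, hτσ⟩
        · exact absurd (h1.trans (wle1 α σ)) hτα
    · by_cases hτα : τ ≤ α
      · rcases chain (wedge α σ) τ α (wle1 α σ) hτα with h1 | h1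
        · exact Or.inl ⟨h1, hτα⟩
        · exact absurd (h1.trans (wle2 α σ)) hτσ
      · exfalso; apply hemp
        have h1 : wedge τ σ ≠ τ := fun e => hτσ (e ▸ wle2 τ σ)
        have h2 : wedge τ α ≠ τ := fun e => hτα (e ▸ wle2 τ α)
        rcases chain (wedge τ σ) (wedge τ α) τ (wle1 τ σ) (wle1 τ α) with hc | hc
        · exact ⟨wedge τ α,
            ⟨Or.inl ⟨hc, wle1 τ α⟩, h2⟩,
            ⟨Or.inl ⟨le_refl _, wle1 τ α⟩, h2⟩⟩
        · exact ⟨wedge τ σ,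
            ⟨Or.inl ⟨le_refl _, wle1 τ σ⟩, h1⟩,
            ⟨Or.inl ⟨hc, wle1 τ σ⟩, h1⟩⟩
  · rintro h ⟨-, γ, hγσ, hγα⟩
    obtain ⟨hγσseg, hγσne⟩ := hγσ
    obtain ⟨hγαseg, hγαne⟩ := hγα
    have hγσne' : γ ≠ τ := hγσne
    rcases h with ⟨hws, hτα⟩ | ⟨hws, hτσ⟩
    · -- τ ≤ α, wedge α σ ≤ τ
      have heq : wedge τ α = τ := le_antisymm (wle1 τ α) (wglb τ α τ le_rfl hτα)
      have hτγ : τ ≤ γ := by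
        rcases hγαseg with ⟨h1, h2⟩ | ⟨h1, h2⟩
        · exact heq ▸ h1
        · exact heq ▸ h1
      have hγα2 : γ ≤ α := by
        rcases hγαseg with ⟨h1, h2⟩ | ⟨h1, h2⟩
        · exact absurd (le_antisymm h2 hτγ) hγαne
        · exact h2
      rcases hγσseg with ⟨h1, h2⟩ | ⟨h1, h2⟩
      · exact hγσne' (le_antisymm h2 hτγ)
      · have : γ ≤ τ := (wglb α σ γ hγα2 h2).trans hws
        exact hγσne' (le_antisymm this hτγ)
    · -- τ ≤ σ, wedge α σ ≤ τ
      have heq : wedge τ σ = τ := le_antisymm (wle1 τ σ) (wglb τ σ τ le_rfl hτσ)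
      have hτγ : τ ≤ γ := by
        rcases hγσseg with ⟨h1, h2⟩ | ⟨h1, h2⟩
        · exact heq ▸ h1
        · exact heq ▸ h1
      rcases hγαseg with ⟨h1, h2⟩ | ⟨h1, h2⟩
      · exact hγαne (le_antisymm h2 hτγ)
      · have hγσ2 : γ ≤ σ := by
          rcases hγσseg with ⟨h3, h4⟩ | ⟨h3, h4⟩
          · exact h4.trans hτσ
          · exact h4
        have : γ ≤ τ := (wglb α σ γ h2 hγσ2).trans hws
        exact hγαne (le_antisymm this hτγ)
end

section
/- Let (T, ≤) be a rooted non-metric tree with increasing parametrization Ψ: T → [1,∞] and associated metric d_Ψ. Then every set of the form [σ]_τ (a tangent vector class) is open in the metric topology of d_Ψ; consequently the weak tree topology is coarser than or equal to the topology of d_Ψ. -/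
variable {T : Type*} [PartialOrder T]

open ENNReal in
/-- The distance associated to a parametrization `Ψ : T → [1,∞]`:
`d_Ψ(a,b) = (1/Ψ(a∧b) − 1/Ψ(a)) + (1/Ψ(a∧b) − 1/Ψ(b))`. -/
noncomputable def dPsi (wedge : T → T → T) (Ψ : T → ℝ≥0∞) (a b : T) : ℝ :=
  ((Ψ (wedge a b))⁻¹.toReal - (Ψ a)⁻¹.toReal) +
    ((Ψ (wedge a b))⁻¹.toReal - (Ψ b)⁻¹.toReal)

/-- The weak tree topology, generated by the tangent-vector classes. -/
def weakTreeTopology (wedge : T → T → T) : TopologicalSpace T :=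
  TopologicalSpace.generateFrom {U | ∃ τ σ : T, σ ≠ τ ∧ U = tangClass wedge τ σ}

/-- The topology associated with the metric `d_Ψ`, generated by open balls. -/
noncomputable def dPsiTopology (wedge : T → T → T) (Ψ : T → ENNReal) :
    TopologicalSpace T :=
  TopologicalSpace.generateFrom
    {B | ∃ (x : T) (ε : ℝ), 0 < ε ∧ B = {y | dPsi wedge Ψ x y < ε}}

/-- every tangent-vector class `[σ]_τ` is open in the metric
topology of `d_Ψ`; consequently the weak tree topology is coarser than or equal
to the topology of `d_Ψ` (i.e. the metric topology is finer). -/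
theorem weakTreeTopology_coarser_than_dPsiTopology
    -- (T1): a root
    (τ₀ : T) (hroot : ∀ t : T, τ₀ ≤ t)
    -- (T2): down-sets are order-isomorphic to real intervals
    (hI : ∀ τ : T, ∃ s : Set ℝ, s.OrdConnected ∧
      Nonempty ({σ : T // σ ≤ τ} ≃o s))
    -- (T3): totally ordered convex subsets are order-isomorphic to real intervals
    (hT3 : ∀ C : Set T, IsChain (· ≤ ·) C → C.OrdConnected →
      ∃ s : Set ℝ, s.OrdConnected ∧ Nonempty (C ≃o s))
    -- (T4'): pairwise infima, realized by `wedge`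
    (wedge : T → T → T) (hwedge : ∀ a b : T, IsGLB {a, b} (wedge a b))
    -- `Ψ` is an increasing parametrization with values in `[1,∞]`
    (Ψ : T → ENNReal) (hΨ1 : ∀ t, 1 ≤ Ψ t) (hΨmono : Monotone Ψ)
    (hΨstrict : ∀ a b : T, a < b → Ψ a < Ψ b)
    (hΨsurj : ∀ a b : T, a ≤ b → ∀ c : ENNReal, Ψ a ≤ c → c ≤ Ψ b →
      ∃ t : T, a ≤ t ∧ t ≤ b ∧ Ψ t = c)
    : (∀ τ σ : T, σ ≠ τ →
        @IsOpen T (dPsiTopology wedge Ψ) (tangClass wedge τ σ)) ∧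
      dPsiTopology wedge Ψ ≤ weakTreeTopology wedge := by
  classical
  -- wedge basics
  have wle1 : ∀ a b : T, wedge a b ≤ a := fun a b =>
    (hwedge a b).1 (Set.mem_insert _ _)
  have wle2 : ∀ a b : T, wedge a b ≤ b := fun a b =>
    (hwedge a b).1 (Set.mem_insert_of_mem _ rfl)
  have wglb : ∀ a b c : T, c ≤ a → c ≤ b → c ≤ wedge a b := by
    intro a b c h1 h2
    exact (hwedge a b).2 (by rintro x (rfl | rfl) <;> assumption)
  have wsymm : ∀ a b : T, wedge a b = wedge b a := fun a b =>
    (hwedge a b).unique (by rw [Set.pair_comm]; exact hwedge b a)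
  have wself : ∀ a : T, wedge a a = a := fun a =>
    (hwedge a a).unique (by rw [Set.pair_eq_singleton]; exact isGLB_singleton)
  have weq_left : ∀ a b : T, a ≤ b → wedge a b = a := fun a b h =>
    le_antisymm (wle1 a b) (wglb a b a le_rfl h)
  -- comparability of elements below a common element
  have cmp : ∀ z x y : T, x ≤ z → y ≤ z → x ≤ y ∨ y ≤ x := by
    intro z x y hx hy
    obtain ⟨s, -, ⟨e⟩⟩ := hI z
    rcases le_total (e ⟨x, hx⟩) (e ⟨y, hy⟩) with h | h
    · exact Or.inl (Subtype.mk_le_mk.1 (e.le_iff_le.1 h))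
    · exact Or.inr (Subtype.mk_le_mk.1 (e.le_iff_le.1 h))
  -- facts about f t := ((Ψ t)⁻¹).toReal
  have hfin : ∀ t : T, (Ψ t)⁻¹ ≠ ⊤ := fun t =>
    ne_top_of_le_ne_top ENNReal.one_ne_top (ENNReal.inv_le_one.2 (hΨ1 t))
  have fanti : ∀ a b : T, a ≤ b → ((Ψ b)⁻¹).toReal ≤ ((Ψ a)⁻¹).toReal := fun a b h =>
    ENNReal.toReal_mono (hfin a) (ENNReal.inv_le_inv.2 (hΨmono h))
  have fstrict : ∀ a b : T, a < b → ((Ψ b)⁻¹).toReal < ((Ψ a)⁻¹).toReal := fun a b h =>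
    ENNReal.toReal_strict_mono (hfin a) (ENNReal.inv_lt_inv.2 (hΨstrict a b h))
  -- positivity of the distance
  have dpos : ∀ a b : T, a ≠ b → 0 < dPsi wedge Ψ a b := by
    intro a b hne
    have h1 := wle1 a b
    have h2 := wle2 a b
    have t1 := fanti _ _ h1
    have t2 := fanti _ _ h2
    have key : wedge a b < a ∨ wedge a b < b := by
      rcases eq_or_lt_of_le h1 with h | h
      · rcases eq_or_lt_of_le h2 with h' | h'
        · exact absurd (h.symm.trans h') hne
        · exact Or.inr h'
      · exact Or.inl h
    simp only [dPsi]
    rcases key with h | h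
    · have := fstrict _ _ h; linarith
    · have := fstrict _ _ h; linarith
  -- characterization of the tangent relation
  have tchar : ∀ τ a b : T, tangRel wedge τ a b ↔
      (wedge τ a < τ ∧ wedge τ b < τ) ∨ τ < wedge a b := by
    intro τ a b
    constructor
    · rintro ⟨x, hxa, hxb⟩
      obtain ⟨hsa, hxτ'⟩ := hxa
      obtain ⟨hsb, -⟩ := hxb
      have hxτ : x ≠ τ := hxτ'
      have h1 : wedge τ a ≤ x := by rcases hsa with ⟨h, -⟩ | ⟨h, -⟩ <;> exact h
      have h2 : wedge τ b ≤ x := by rcases hsb with ⟨h, -⟩ | ⟨h, -⟩ <;> exact h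
      by_cases hle : x ≤ τ
      · have hx : x < τ := lt_of_le_of_ne hle hxτ
        exact Or.inl ⟨lt_of_le_of_lt h1 hx, lt_of_le_of_lt h2 hx⟩
      · have ha : x ≤ a := by
          rcases hsa with ⟨-, h⟩ | ⟨-, h⟩
          · exact absurd h hle
          · exact h
        have hb : x ≤ b := by
          rcases hsb with ⟨-, h⟩ | ⟨-, h⟩
          · exact absurd h hle
          · exact h
        by_cases hτx : τ ≤ x
        · exact Or.inr (lt_of_lt_of_le (lt_of_le_of_ne hτx (Ne.symm hxτ))
            (wglb a b x ha hb))
        · refine Or.inl ⟨lt_of_le_of_ne (wle1 τ a) ?_, lt_of_le_of_ne (wle1 τ b) ?_⟩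
          · intro h; exact hτx (h ▸ h1)
          · intro h; exact hτx (h ▸ h2)
    · rintro (⟨ha, hb⟩ | h)
      · rcases cmp τ (wedge τ a) (wedge τ b) (wle1 τ a) (wle1 τ b) with h | h
        · exact ⟨wedge τ b, ⟨Or.inl ⟨h, le_of_lt hb⟩, ne_of_lt hb⟩,
            ⟨Or.inl ⟨le_rfl, le_of_lt hb⟩, ne_of_lt hb⟩⟩
        · exact ⟨wedge τ a, ⟨Or.inl ⟨le_rfl, le_of_lt ha⟩, ne_of_lt ha⟩,
            ⟨Or.inl ⟨h, le_of_lt ha⟩, ne_of_lt ha⟩⟩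
      · have hτa : τ ≤ a := (le_of_lt h).trans (wle1 a b)
        have hτb : τ ≤ b := (le_of_lt h).trans (wle2 a b)
        refine ⟨wedge a b,
          ⟨Or.inr ⟨?_, wle1 a b⟩, ne_of_gt h⟩,
          ⟨Or.inr ⟨?_, wle2 a b⟩, ne_of_gt h⟩⟩
        · rw [weq_left τ a hτa]; exact le_of_lt h
        · rw [weq_left τ b hτb]; exact le_of_lt h
  -- core metric lemma
  have core : ∀ τ σ γ α : T, γ ≠ τ → tangRel wedge τ σ γ →
      dPsi wedge Ψ γ α < dPsi wedge Ψ γ τ → α ≠ τ ∧ tangRel wedge τ σ α := by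
    intro τ σ γ α hγτ hrel hlt
    have hατ : α ≠ τ := by rintro rfl; exact lt_irrefl _ hlt
    refine ⟨hατ, ?_⟩
    rcases (tchar τ σ γ).1 hrel with ⟨hσd, hγd⟩ | hup
    · -- "down" case
      refine (tchar τ σ α).2 (Or.inl ⟨hσd, ?_⟩)
      by_contra hcon
      have heq : wedge τ α = τ := ((wle1 τ α).lt_or_eq).resolve_left hcon
      have hτα : τ ≤ α := heq ▸ (wle2 τ α)
      clear hcon
      have hm : wedge γ α ≤ wedge τ γ := by
        rcases cmp α (wedge γ α) τ (wle2 γ α) hτα with h | h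
        · exact wglb τ γ _ h (wle1 γ α)
        · exact absurd (wglb τ γ τ le_rfl (h.trans (wle1 γ α))) hγd.not_ge
      have hw : wedge γ τ = wedge τ γ := wsymm γ τ
      have e1 := fanti _ _ hm
      have e2 := fanti _ _ hτα
      simp only [dPsi, hw] at hlt
      linarith
    · -- "up" case
      have hτγ : τ ≤ γ := (le_of_lt hup).trans (wle2 σ γ)
      have hwτγ : wedge γ τ = τ := by rw [wsymm]; exact weq_left τ γ hτγ
      by_cases hmτ : wedge γ α ≤ τ
      · exfalso
        have e1 := fanti _ _ hmτ
        have e2 := fanti _ _ (wle2 γ α)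
        have e3 := fanti _ _ hτγ
        simp only [dPsi, hwτγ] at hlt
        linarith
      · have hτm : τ ≤ wedge γ α :=
          (cmp γ (wedge γ α) τ (wle1 γ α) hτγ).resolve_left hmτ
        have hq : τ < wedge γ α := lt_of_le_of_ne hτm
          (fun e => hmτ (le_of_eq e.symm))
        refine (tchar τ σ α).2 (Or.inr ?_)
        rcases cmp γ (wedge σ γ) (wedge γ α) (wle2 σ γ) (wle1 γ α) with h | h
        · exact lt_of_lt_of_le hup (wglb σ α _ (wle1 σ γ) (h.trans (wle2 γ α)))
        · exact lt_of_lt_of_le hq (wglb σ α _ (h.trans (wle1 σ γ)) (wle2 γ α))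
  -- every tangent class is open
  have main : ∀ τ σ : T, σ ≠ τ →
      @IsOpen T (dPsiTopology wedge Ψ) (tangClass wedge τ σ) := by
    intro τ σ hστ
    letI : TopologicalSpace T := dPsiTopology wedge Ψ
    have hEq : tangClass wedge τ σ =
        ⋃ γ ∈ tangClass wedge τ σ, {y | dPsi wedge Ψ γ y < dPsi wedge Ψ γ τ} := by
      ext α
      simp only [Set.mem_iUnion, Set.mem_setOf_eq, tangClass]
      constructor
      · intro hα
        refine ⟨α, hα, ?_⟩
        have h0 : dPsi wedge Ψ α α = 0 := by simp [dPsi, wself]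
        rw [h0]
        exact dpos α τ hα.1
      · rintro ⟨γ, hγ, hlt⟩
        exact core τ σ γ α hγ.1 hγ.2 hlt
    rw [hEq]
    refine isOpen_biUnion ?_
    intro γ hγ
    exact TopologicalSpace.isOpen_generateFrom_of_mem
      ⟨γ, dPsi wedge Ψ γ τ, dpos γ τ hγ.1, rfl⟩
  refine ⟨main, ?_⟩
  rw [weakTreeTopology]
  apply le_generateFrom
  rintro U ⟨τ, σ, hστ, rfl⟩
  exact main τ σ hστ
end

section
/- Let (T, ≤) be a rooted non-metric tree and σ ∈ T a point with uncountably many tangent vectors (branches) at σ. Then the weak tree topology on T is not first countable at σ: there is no countable neighbourhood basis of σ. -/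
variable {T : Type*} [PartialOrder T]

section AuxLemmas

variable (wedge : T → T → T)

lemma wedge_le_left (hwedge : ∀ a b : T, IsGLB {a, b} (wedge a b)) (a b : T) : wedge a b ≤ a :=
  (hwedge a b).1 (by simp)

lemma wedge_le_right (hwedge : ∀ a b : T, IsGLB {a, b} (wedge a b)) (a b : T) : wedge a b ≤ b :=
  (hwedge a b).1 (by simp)

lemma le_wedge (hwedge : ∀ a b : T, IsGLB {a, b} (wedge a b)) {a b c : T} (h1 : c ≤ a) (h2 : c ≤ b) : c ≤ wedge a b :=
  (hwedge a b).2 (by rintro x (rfl | rfl) <;> assumption)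

lemma wedge_eq_left (hwedge : ∀ a b : T, IsGLB {a, b} (wedge a b)) {a b : T} (h : a ≤ b) : wedge a b = a :=
  le_antisymm (wedge_le_left wedge hwedge a b) (le_wedge wedge hwedge le_rfl h)

lemma tangRel_symm {τ a b : T} (h : tangRel wedge τ a b) : tangRel wedge τ b a := by
  rcases h with ⟨z, hz1, hz2⟩; exact ⟨z, hz2, hz1⟩

/-- Characterization of the tangent relation at `σ`. -/
lemma tangRel_iff (hwedge : ∀ a b : T, IsGLB {a, b} (wedge a b)) (hchain : ∀ ⦃x y z : T⦄, x ≤ z → y ≤ z → x ≤ y ∨ y ≤ x) {σ a b : T} (ha : a ≠ σ) (hb : b ≠ σ) :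
    tangRel wedge σ a b ↔ ((¬ σ ≤ a ∧ ¬ σ ≤ b) ∨ σ < wedge a b) := by
  constructor
  · rintro ⟨z, ⟨hza, hzσ1⟩, ⟨hzb, hzσ2⟩⟩
    simp only [Set.mem_singleton_iff] at hzσ1 hzσ2
    by_cases hsa : σ ≤ a
    · have hw : wedge σ a = σ := wedge_eq_left wedge hwedge hsa
      have hza' : σ ≤ z ∧ z ≤ a := by
        rcases hza with ⟨h1, h2⟩ | ⟨h1, h2⟩
        · exact absurd (le_antisymm h2 (hw ▸ h1)) hzσ1
        · exact ⟨hw ▸ h1, h2⟩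
      by_cases hsb : σ ≤ b
      · have hwb : wedge σ b = σ := wedge_eq_left wedge hwedge hsb
        have hzb' : σ ≤ z ∧ z ≤ b := by
          rcases hzb with ⟨h1, h2⟩ | ⟨h1, h2⟩
          · exact absurd (le_antisymm h2 (hwb ▸ h1)) hzσ1
          · exact ⟨hwb ▸ h1, h2⟩
        right
        have hz : σ < z := lt_of_le_of_ne hza'.1 (Ne.symm hzσ1)
        exact hz.trans_le (le_wedge wedge hwedge hza'.2 hzb'.2)
      · exfalso
        rcases hzb with ⟨h1, h2⟩ | ⟨h1, h2⟩
        · exact hzσ1 (le_antisymm h2 hza'.1)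
        · exact hsb (le_trans hza'.1 h2)
    · by_cases hsb : σ ≤ b
      · exfalso
        have hwb : wedge σ b = σ := wedge_eq_left wedge hwedge hsb
        have hzb' : σ ≤ z ∧ z ≤ b := by
          rcases hzb with ⟨h1, h2⟩ | ⟨h1, h2⟩
          · exact absurd (le_antisymm h2 (hwb ▸ h1)) hzσ2
          · exact ⟨hwb ▸ h1, h2⟩
        rcases hza with ⟨h1, h2⟩ | ⟨h1, h2⟩
        · exact hzσ1 (le_antisymm h2 hzb'.1)
        · exact hsa (le_trans hzb'.1 h2)
      · exact Or.inl ⟨hsa, hsb⟩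
  · rintro (⟨hsa, hsb⟩ | hup)
    · rcases hchain (wedge_le_left wedge hwedge σ a) (wedge_le_left wedge hwedge σ b)
        with h | h
      · refine ⟨wedge σ b, ⟨Or.inl ⟨h, wedge_le_left wedge hwedge σ b⟩, ?_⟩,
          ⟨Or.inl ⟨le_rfl, wedge_le_left wedge hwedge σ b⟩, ?_⟩⟩ <;>
        · simp only [Set.mem_singleton_iff]
          intro he
          exact hsb (he ▸ wedge_le_right wedge hwedge σ b)
      · refine ⟨wedge σ a, ⟨Or.inl ⟨le_rfl, wedge_le_left wedge hwedge σ a⟩, ?_⟩,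
          ⟨Or.inl ⟨h, wedge_le_left wedge hwedge σ a⟩, ?_⟩⟩ <;>
        · simp only [Set.mem_singleton_iff]
          intro he
          exact hsa (he ▸ wedge_le_right wedge hwedge σ a)
    · have hla : σ ≤ a := hup.le.trans (wedge_le_left wedge hwedge a b)
      have hlb : σ ≤ b := hup.le.trans (wedge_le_right wedge hwedge a b)
      have hwa : wedge σ a = σ := wedge_eq_left wedge hwedge hla
      have hwb : wedge σ b = σ := wedge_eq_left wedge hwedge hlb
      refine ⟨wedge a b, ⟨Or.inr ⟨hwa.le.trans hup.le, wedge_le_left wedge hwedge a b⟩, ?_⟩,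
        ⟨Or.inr ⟨hwb.le.trans hup.le, wedge_le_right wedge hwedge a b⟩, ?_⟩⟩ <;>
      · simp only [Set.mem_singleton_iff]
        exact fun he => absurd he.symm hup.ne

/-- Points of `tangRel` are distinct from the base point. -/
lemma tangRel_ne (hwedge : ∀ a b : T, IsGLB {a, b} (wedge a b)) {σ a b : T} (h : tangRel wedge σ a b) : a ≠ σ ∧ b ≠ σ := by
  constructor
  · rintro rfl
    rcases h with ⟨z, ⟨hza, hzσ⟩, -⟩
    simp only [Set.mem_singleton_iff] at hzσ
    have hw : wedge a a = a := wedge_eq_left wedge hwedge le_rfl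
    rcases hza with ⟨h1, h2⟩ | ⟨h1, h2⟩ <;> exact hzσ (le_antisymm h2 (hw ▸ h1))
  · rintro rfl
    rcases h with ⟨z, -, ⟨hzb, hzσ⟩⟩
    simp only [Set.mem_singleton_iff] at hzσ
    have hw : wedge b b = b := wedge_eq_left wedge hwedge le_rfl
    rcases hzb with ⟨h1, h2⟩ | ⟨h1, h2⟩ <;> exact hzσ (le_antisymm h2 (hw ▸ h1))

/-- `tangRel` is reflexive away from the base point. -/
lemma tangRel_refl (hwedge : ∀ a b : T, IsGLB {a, b} (wedge a b)) (hchain : ∀ ⦃x y z : T⦄, x ≤ z → y ≤ z → x ≤ y ∨ y ≤ x) {σ a : T} (ha : a ≠ σ) : tangRel wedge σ a a := by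
  rw [tangRel_iff wedge hwedge hchain ha ha]
  by_cases hsa : σ ≤ a
  · right
    have hw : wedge a a = a := wedge_eq_left wedge hwedge le_rfl
    exact lt_of_lt_of_le (lt_of_le_of_ne hsa (Ne.symm ha)) hw.ge
  · exact Or.inl ⟨hsa, hsa⟩

/-- `tangRel` is transitive. -/
lemma tangRel_trans (hwedge : ∀ a b : T, IsGLB {a, b} (wedge a b)) (hchain : ∀ ⦃x y z : T⦄, x ≤ z → y ≤ z → x ≤ y ∨ y ≤ x) {σ a b c : T} (hab : tangRel wedge σ a b)
    (hbc : tangRel wedge σ b c) : tangRel wedge σ a c := by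
  obtain ⟨ha, hb⟩ := tangRel_ne wedge hwedge hab
  obtain ⟨-, hc⟩ := tangRel_ne wedge hwedge hbc
  rw [tangRel_iff wedge hwedge hchain ha hb] at hab
  rw [tangRel_iff wedge hwedge hchain hb hc] at hbc
  rw [tangRel_iff wedge hwedge hchain ha hc]
  rcases hab with ⟨hsa, hsb⟩ | hup1
  · rcases hbc with ⟨-, hsc⟩ | hup2
    · exact Or.inl ⟨hsa, hsc⟩
    · exact absurd (hup2.le.trans (wedge_le_left wedge hwedge b c)) hsb
  · rcases hbc with ⟨hsb, -⟩ | hup2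
    · exact absurd (hup1.le.trans (wedge_le_right wedge hwedge a b)) hsb
    · right
      rcases hchain (wedge_le_right wedge hwedge a b) (wedge_le_left wedge hwedge b c)
        with h | h
      · exact hup1.trans_le (le_wedge wedge hwedge (wedge_le_left wedge hwedge a b)
          (h.trans (wedge_le_right wedge hwedge b c)))
      · exact hup2.trans_le (le_wedge wedge hwedge (h.trans
          (wedge_le_left wedge hwedge a b)) (wedge_le_right wedge hwedge b c))

/-- Tangent classes of related points coincide. -/
lemma tangClass_eq_of_tangRel (hwedge : ∀ a b : T, IsGLB {a, b} (wedge a b)) (hchain : ∀ ⦃x y z : T⦄, x ≤ z → y ≤ z → x ≤ y ∨ y ≤ x) {σ a b : T} (h : tangRel wedge σ a b) :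
    tangClass wedge σ a = tangClass wedge σ b := by
  ext x
  constructor
  · rintro ⟨hx, hr⟩
    exact ⟨hx, tangRel_trans wedge hwedge hchain (tangRel_symm wedge h) hr⟩
  · rintro ⟨hx, hr⟩
    exact ⟨hx, tangRel_trans wedge hwedge hchain h hr⟩

/-- KEY: a subbasic open set containing `σ` contains every point `γ ≠ σ` which is
not tangent to `τ` at `σ`. -/
lemma key_lemma (hwedge : ∀ a b : T, IsGLB {a, b} (wedge a b)) (hchain : ∀ ⦃x y z : T⦄, x ≤ z → y ≤ z → x ≤ y ∨ y ≤ x) {σ τ β γ : T} (hσβ : tangRel wedge τ σ β) (hστ : σ ≠ τ)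
    (hγσ : γ ≠ σ) (hno : ¬ tangRel wedge σ τ γ) :
    γ ≠ τ ∧ tangRel wedge τ γ β := by
  have hτσ : τ ≠ σ := hστ.symm
  have hγτ : γ ≠ τ := by
    rintro rfl
    exact hno (tangRel_refl wedge hwedge hchain hτσ)
  obtain ⟨-, hβτ⟩ := tangRel_ne wedge hwedge hσβ
  refine ⟨hγτ, ?_⟩
  rw [tangRel_iff wedge hwedge hchain hστ hβτ] at hσβ
  rw [tangRel_iff wedge hwedge hchain hγτ hβτ]
  rw [tangRel_iff wedge hwedge hchain hτσ hγσ] at hno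
  push_neg at hno
  obtain ⟨hor, hnup⟩ := hno
  rcases hσβ with ⟨hτσ', hτβ'⟩ | hup
  · left
    refine ⟨?_, hτβ'⟩
    intro hτγ
    by_cases hστ' : σ ≤ τ
    · have hlt : σ < τ := lt_of_le_of_ne hστ' hστ
      exact hnup (hlt.trans_le (le_wedge wedge hwedge le_rfl hτγ))
    · rcases hchain hτγ (hor hστ') with h | h
      · exact hτσ' h
      · have hlt : σ < τ := lt_of_le_of_ne h hστ
        exact hnup (hlt.trans_le (le_wedge wedge hwedge le_rfl hτγ))
  · right
    have hτσlt : τ < σ := hup.trans_le (wedge_le_left wedge hwedge σ β)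
    have hσγ : σ ≤ γ := by
      by_cases hστ' : σ ≤ τ
      · exact absurd (le_antisymm hστ' hτσlt.le) hστ
      · exact hor hστ'
    exact hup.trans_le (le_wedge wedge hwedge ((wedge_le_left wedge hwedge σ β).trans hσγ) (wedge_le_right wedge hwedge σ β))

/-- Decomposition of generated-open sets into finite intersections of subbasic sets. -/
lemma generateOpen_decomp {S : Set (Set T)} {σ : T} :
    ∀ U : Set T, TopologicalSpace.GenerateOpen S U → σ ∈ U →
      ∃ t : Set (Set T), t.Finite ∧ t ⊆ S ∧ (∀ V ∈ t, σ ∈ V) ∧ ⋂₀ t ⊆ U := by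
  intro U hU
  induction hU with
  | basic V hV => exact fun hσ => ⟨{V}, Set.finite_singleton V, by simpa using hV,
      by simpa using hσ, by simp⟩
  | univ => exact fun _ => ⟨∅, Set.finite_empty, by simp, by simp, by simp⟩
  | inter U V hU hV ihU ihV =>
    intro hσ
    obtain ⟨t1, ht1f, ht1S, ht1σ, ht1U⟩ := ihU hσ.1
    obtain ⟨t2, ht2f, ht2S, ht2σ, ht2U⟩ := ihV hσ.2
    refine ⟨t1 ∪ t2, ht1f.union ht2f, Set.union_subset ht1S ht2S, ?_, ?_⟩
    · rintro W (hW | hW)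
      · exact ht1σ W hW
      · exact ht2σ W hW
    · intro x hx
      exact ⟨ht1U (fun W hW => hx W (Or.inl hW)), ht2U (fun W hW => hx W (Or.inr hW))⟩
  | sUnion s hs ih =>
    intro hσ
    obtain ⟨V, hVs, hσV⟩ := hσ
    obtain ⟨t, htf, htS, htσ, htU⟩ := ih V hVs hσV
    exact ⟨t, htf, htS, htσ, fun x hx => ⟨V, hVs, htU hx⟩⟩

end AuxLemmas

/-- if `σ` has uncountably many tangent vectors (branches), then
the weak tree topology has no countable neighbourhood basis at `σ`. -/
theorem weakTreeTopology_not_firstCountable_at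
    -- (T1): a root
    (τ₀ : T) (hroot : ∀ t : T, τ₀ ≤ t)
    -- (T2): down-sets are order-isomorphic to real intervals
    (hI : ∀ τ : T, ∃ s : Set ℝ, s.OrdConnected ∧
      Nonempty ({σ : T // σ ≤ τ} ≃o s))
    -- (T3): totally ordered convex subsets are order-isomorphic to real intervals
    (hT3 : ∀ C : Set T, IsChain (· ≤ ·) C → C.OrdConnected →
      ∃ s : Set ℝ, s.OrdConnected ∧ Nonempty (C ≃o s))
    -- (T4'): pairwise infima, realized by `wedge`
    (wedge : T → T → T) (hwedge : ∀ a b : T, IsGLB {a, b} (wedge a b))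
    (σ : T)
    (huncount : ¬ Set.Countable {C : Set T | ∃ α : T, α ≠ σ ∧ C = tangClass wedge σ α}) :
    ¬ ∃ f : ℕ → Set T,
        (∀ n : ℕ, @IsOpen T (weakTreeTopology wedge) (f n) ∧ σ ∈ f n) ∧
        (∀ U : Set T, @IsOpen T (weakTreeTopology wedge) U → σ ∈ U →
          ∃ n : ℕ, f n ⊆ U) := by
  -- down-sets are chains
  have hchain : ∀ ⦃x y z : T⦄, x ≤ z → y ≤ z → x ≤ y ∨ y ≤ x := by
    intro x y z hx hy
    obtain ⟨s, -, ⟨e⟩⟩ := hI z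
    have := le_total (e ⟨x, hx⟩) (e ⟨y, hy⟩)
    rcases this with h | h
    · exact Or.inl (by simpa using e.le_iff_le.mp h)
    · exact Or.inr (by simpa using e.le_iff_le.mp h)
  rintro ⟨f, h1, h2⟩
  set S : Set (Set T) := {U | ∃ τ σ' : T, σ' ≠ τ ∧ U = tangClass wedge τ σ'} with hS
  -- choose finite subbasic families for each f n
  have hdec : ∀ n : ℕ, ∃ t : Set (Set T), t.Finite ∧ t ⊆ S ∧ (∀ V ∈ t, σ ∈ V) ∧
      ⋂₀ t ⊆ f n := fun n =>
    generateOpen_decomp (f n) (h1 n).1 (h1 n).2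
  choose t htf htS htσ htU using hdec
  -- the countable family of "bad" branches
  classical
  let g : Set T → Set T := fun V =>
    tangClass wedge σ (if h : V ∈ S then h.choose else σ)
  set D : Set (Set T) := ⋃ n, g '' (t n) with hD
  have hDc : D.Countable :=
    Set.countable_iUnion (fun n => ((htf n).image g).countable)
  -- pick a fresh branch
  have hsub : ¬ {C : Set T | ∃ α : T, α ≠ σ ∧ C = tangClass wedge σ α} ⊆ D := by
    intro h
    exact huncount (hDc.mono h)
  obtain ⟨C, ⟨α, hασ, rfl⟩, hCD⟩ := Set.not_subset.mp hsub
  -- α lies in every f n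
  have hαf : ∀ n, α ∈ f n := by
    intro n
    apply htU n
    intro V hV
    have hVS : V ∈ S := htS n hV
    obtain ⟨β, hβτ, hVeq⟩ := hVS.choose_spec
    set τ := hVS.choose with hτ
    have hσV : σ ∈ V := htσ n V hV
    rw [hVeq] at hσV
    obtain ⟨hστ, hrel⟩ := hσV
    have hno : ¬ tangRel wedge σ τ α := by
      intro hcon
      apply hCD
      have : tangClass wedge σ α = tangClass wedge σ τ :=
        (tangClass_eq_of_tangRel wedge hwedge hchain hcon).symm
      rw [hD]
      refine Set.mem_iUnion.mpr ⟨n, ⟨V, hV, ?_⟩⟩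
      simp only [g, dif_pos hVS]
      exact this.symm
    obtain ⟨hατ, hrel'⟩ := key_lemma wedge hwedge hchain
      (tangRel_symm wedge hrel) hστ hασ hno
    rw [hVeq]
    exact ⟨hατ, tangRel_symm wedge hrel'⟩
  -- the neighbourhood avoiding α
  have hV0open : @IsOpen T (weakTreeTopology wedge) (tangClass wedge α σ) :=
    TopologicalSpace.GenerateOpen.basic _ ⟨α, σ, hασ.symm, rfl⟩
  have hσV0 : σ ∈ tangClass wedge α σ :=
    ⟨hασ.symm, tangRel_refl wedge hwedge hchain hασ.symm⟩
  obtain ⟨n, hn⟩ := h2 _ hV0open hσV0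
  exact (hn (hαf n)).1 rfl
end

section
/- Let R be a two-dimensional regular local ring (hence a UFD) and ν a centered real-valued valuation on R with support p_ν satisfying (0) ⊊ p_ν ⊊ m. Then p_ν = (φ) for an irreducible element φ ∈ R, and the map krull[ν]: R → (ℤ × ℝ) ∪ {∞} (lexicographic order) defined by krull[ν](ψ) = (r, ν(ψ')) where ψ = φ^r ψ' with φ ∤ ψ' is a Krull valuation on R (i.e., krull[ν]⁻¹(∞) = {0}), and its definition is independent of the choice of generator φ of p_ν. -/
open IsLocalRing

/-- `w` represents the Krull valuation `krull[ν]` associated with `ν` and the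
irreducible element `φ` generating the support: `w(φ^r ψ') = (r, ν(ψ'))` whenever
`φ ∤ ψ'`, with values in `ℤ ×ₗ ℝ` (lexicographic order). -/
def KrullRep {R : Type*} [CommRing R] (φ : R) (v : R → WithTop ℝ)
    (w : R → WithTop (ℤ ×ₗ ℝ)) : Prop :=
  w 0 = ⊤ ∧ ∀ (r : ℕ) (ψ' : R), ¬ φ ∣ ψ' →
    w (φ ^ r * ψ') = ((toLex ((r : ℤ), WithTop.untopD 0 (v ψ')) : ℤ ×ₗ ℝ) : WithTop (ℤ ×ₗ ℝ))

private lemma untop'_mono {x y : WithTop ℝ} (hxy : x ≤ y) (hy : y ≠ ⊤) :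
    WithTop.untopD 0 x ≤ WithTop.untopD 0 y := by
  lift y to ℝ using hy
  lift x to ℝ using (lt_of_le_of_lt hxy (WithTop.coe_lt_top y)).ne
  simpa using hxy

private lemma untop'_add {x y : WithTop ℝ} (hx : x ≠ ⊤) (hy : y ≠ ⊤) :
    WithTop.untopD 0 (x + y) = WithTop.untopD 0 x + WithTop.untopD 0 y := by
  lift x to ℝ using hx
  lift y to ℝ using hy
  rw [← WithTop.coe_add]
  rfl

/-- for a centered real-valued valuation `ν` on a two-dimensional
regular local ring `R` (a UFD) whose support `p_ν` satisfies `(0) ⊊ p_ν ⊊ m`,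
the support is generated by an irreducible `φ`, and the map `krull[ν]` given by
`krull[ν](φ^r ψ') = (r, ν(ψ'))` (for `φ ∤ ψ'`) is a Krull valuation on `R` with
values in `ℤ ×ₗ ℝ`, independent of the chosen irreducible generator `φ`. -/
theorem krull_valuation_of_support {R : Type*} [CommRing R] [IsDomain R]
    [IsLocalRing R] [IsNoetherianRing R] [UniqueFactorizationMonoid R]
    (hdim : ringKrullDim R = 2)
    (hreg : ∃ x y : R, maximalIdeal R = Ideal.span {x, y})
    (v : R → WithTop ℝ)
    (hmul : ∀ a b : R, v (a * b) = v a + v b)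
    (hadd : ∀ a b : R, min (v a) (v b) ≤ v (a + b))
    (hone : v 1 = 0) (hzero : v 0 = ⊤)
    (hnonneg : ∀ a : R, 0 ≤ v a)
    (hcent : ∀ a ∈ maximalIdeal R, 0 < v a)
    (P : Ideal R) (hPsupp : ∀ r : R, r ∈ P ↔ v r = ⊤)
    (hP0 : ⊥ < P) (hPm : P < maximalIdeal R) :
    ∃ φ : R, Irreducible φ ∧ P = Ideal.span {φ} ∧
      ∃ w : R → WithTop (ℤ ×ₗ ℝ),
        KrullRep φ v w ∧
        (∀ a b : R, w (a * b) = w a + w b) ∧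
        (∀ a b : R, min (w a) (w b) ≤ w (a + b)) ∧
        w 1 = 0 ∧
        (∀ ψ : R, w ψ = ⊤ ↔ ψ = 0) ∧
        (∀ (φ' : R) (w' : R → WithTop (ℤ ×ₗ ℝ)), Irreducible φ' →
          P = Ideal.span {φ'} → KrullRep φ' v w' → w' = w) := by
  classical
  -- P is a prime ideal
  have hPprime : P.IsPrime := by
    constructor
    · intro h
      have : (1 : R) ∈ P := h ▸ Submodule.mem_top
      rw [hPsupp, hone] at this
      exact (WithTop.zero_ne_top) this
    · intro a b hab
      rw [hPsupp, hmul] at hab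
      rcases WithTop.add_eq_top.mp hab with h | h
      · exact Or.inl ((hPsupp a).mpr h)
      · exact Or.inr ((hPsupp b).mpr h)
  -- find a prime element of P
  obtain ⟨x, hxP, hx0⟩ : ∃ x, x ∈ P ∧ x ≠ 0 := by
    rcases SetLike.exists_of_lt hP0 with ⟨x, hxP, hx⟩
    exact ⟨x, hxP, by simpa using hx⟩
  obtain ⟨φ, hφprime, hφP⟩ : ∃ q : R, Prime q ∧ q ∈ P := by
    have key : ∀ y : R, y ∈ P → y = 0 ∨ IsUnit y ∨ ∃ q : R, Prime q ∧ q ∈ P := by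
      intro y
      induction y using UniqueFactorizationMonoid.induction_on_prime with
      | h₁ => intro _; exact Or.inl rfl
      | h₂ a ha => intro _; exact Or.inr (Or.inl ha)
      | h₃ a p ha hp ih =>
        intro hpa
        rcases hPprime.mem_or_mem hpa with h | h
        · exact Or.inr (Or.inr ⟨p, hp, h⟩)
        · rcases ih h with rfl | h' | h'
          · exact absurd rfl ha
          · rcases h' with ⟨u, rfl⟩
            exact Or.inr (Or.inr ⟨p, hp, by
              have hmem : (p * ↑u) * ↑u⁻¹ ∈ P := Ideal.mul_mem_right _ _ hpa
              simpa [mul_assoc] using hmem⟩)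
          · exact Or.inr (Or.inr h')
    rcases key x hxP with rfl | h | h
    · exact absurd rfl hx0
    · exfalso
      have : (1 : R) ∈ P := by
        rcases h with ⟨u, rfl⟩
        have : (u : R) * ↑u⁻¹ ∈ P := Ideal.mul_mem_right _ _ hxP
        simpa using this
      rw [hPsupp, hone] at this
      exact WithTop.zero_ne_top this
    · exact h
  have hφirr : Irreducible φ := hφprime.irreducible
  have hφ0 : φ ≠ 0 := hφprime.ne_zero
  -- P = span {φ}
  have hPspan : P = Ideal.span {φ} := by
    by_contra hne
    have hsub : Ideal.span {φ} ≤ P := by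
      rw [Ideal.span_le]; simpa using hφP
    have hlt : Ideal.span {φ} < P := lt_of_le_of_ne hsub (fun h => hne h.symm)
    have hspanPrime : (Ideal.span {φ} : Ideal R).IsPrime :=
      (Ideal.span_singleton_prime hφ0).mpr hφprime
    have hbot : (⊥ : Ideal R) < Ideal.span {φ} := by
      rw [bot_lt_iff_ne_bot, Ne, Ideal.span_singleton_eq_bot]
      exact hφ0
    -- build a chain of length 3 in PrimeSpectrum
    let c : LTSeries (PrimeSpectrum R) :=
      (((RelSeries.singleton _ ⟨⊥, Ideal.bot_prime⟩).snoc ⟨Ideal.span {φ}, hspanPrime⟩ (by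
          simpa [← PrimeSpectrum.asIdeal_lt_asIdeal] using hbot)).snoc ⟨P, hPprime⟩ (by
          simpa [RelSeries.last_snoc, ← PrimeSpectrum.asIdeal_lt_asIdeal] using hlt)).snoc
        ⟨maximalIdeal R, (maximalIdeal.isMaximal R).isPrime⟩ (by
          simpa [RelSeries.last_snoc, ← PrimeSpectrum.asIdeal_lt_asIdeal] using hPm)
    have hc := Order.LTSeries.length_le_krullDim c
    rw [show ringKrullDim R = Order.krullDim (PrimeSpectrum R) from rfl] at hdim
    rw [hdim] at hc
    norm_num [c, RelSeries.snoc_length] at hc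
  -- key dividing facts
  have hvne : ∀ {x : R}, ¬ φ ∣ x → v x ≠ ⊤ := by
    intro x hx h
    exact hx (by rwa [← Ideal.mem_span_singleton, ← hPspan, hPsupp])
  have hvtop : ∀ {x : R}, φ ∣ x → v x = ⊤ := by
    intro x hx
    rw [← hPsupp, hPspan, Ideal.mem_span_singleton]
    exact hx
  -- decomposition and uniqueness
  have hdecomp : ∀ ψ : R, ψ ≠ 0 → ∃ n : ℕ, ∃ b : R, ¬ φ ∣ b ∧ ψ = φ ^ n * b :=
    fun ψ h => WfDvdMonoid.max_power_factor h hφirr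
  have huniq : ∀ (r s : ℕ) (a b : R), ¬ φ ∣ a → ¬ φ ∣ b → φ ^ r * a = φ ^ s * b →
      r = s ∧ a = b := by
    have key : ∀ (r s : ℕ) (a b : R), r ≤ s → ¬ φ ∣ a → ¬ φ ∣ b → φ ^ r * a = φ ^ s * b →
        r = s ∧ a = b := by
      intro r s a b hrs ha hb h
      have hps : φ ^ s = φ ^ r * φ ^ (s - r) := by
        rw [← pow_add]; congr 1; omega
      rw [hps, mul_assoc] at h
      have hab : a = φ ^ (s - r) * b := mul_left_cancel₀ (pow_ne_zero r hφ0) h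
      have hsr : s - r = 0 := by
        by_contra hn
        obtain ⟨k, hk⟩ : ∃ k, s - r = k + 1 := ⟨s - r - 1, by omega⟩
        exact ha ⟨φ ^ k * b, by rw [hab, hk, pow_succ]; ring⟩
      constructor
      · omega
      · rw [hab, hsr, pow_zero, one_mul]
    intro r s a b ha hb h
    rcases le_total r s with hrs | hsr
    · exact key r s a b hrs ha hb h
    · obtain ⟨h1, h2⟩ := key s r b a hsr hb ha h.symm
      exact ⟨h1.symm, h2.symm⟩
  -- define w
  set w : R → WithTop (ℤ ×ₗ ℝ) := fun ψ =>
    if h : ψ = 0 then ⊤ else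
      ((toLex (((hdecomp ψ h).choose : ℤ),
        WithTop.untopD 0 (v (hdecomp ψ h).choose_spec.choose)) : ℤ ×ₗ ℝ) : WithTop (ℤ ×ₗ ℝ)) with hw_def
  have hw0 : w 0 = ⊤ := by simp [hw_def]
  have hwspec : ∀ (r : ℕ) (ψ' : R), ¬ φ ∣ ψ' →
      w (φ ^ r * ψ') = ((toLex ((r : ℤ), WithTop.untopD 0 (v ψ')) : ℤ ×ₗ ℝ) : WithTop (ℤ ×ₗ ℝ)) := by
    intro r ψ' hψ'
    have hψ'0 : ψ' ≠ 0 := fun h => hψ' (h ▸ dvd_zero φ)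
    have hne : φ ^ r * ψ' ≠ 0 := mul_ne_zero (pow_ne_zero r hφ0) hψ'0
    rw [hw_def]
    simp only [hne, dif_neg, not_false_iff]
    obtain ⟨hb, heq⟩ := (hdecomp (φ ^ r * ψ') hne).choose_spec.choose_spec
    obtain ⟨h1, h2⟩ := huniq _ r _ ψ' hb hψ' heq.symm
    rw [h2, h1]
  have hKrull : KrullRep φ v w := ⟨hw0, hwspec⟩
  refine ⟨φ, hφirr, hPspan, w, hKrull, ?_, ?_, ?_, ?_, ?_⟩
  · -- multiplicativity
    intro a b
    rcases eq_or_ne a 0 with rfl | ha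
    · simp [hw0]
    rcases eq_or_ne b 0 with rfl | hb
    · simp [hw0]
    obtain ⟨r, a', ha', rfl⟩ := hdecomp a ha
    obtain ⟨s, b', hb', rfl⟩ := hdecomp b hb
    have hab' : ¬ φ ∣ a' * b' := by
      intro h
      rcases hφprime.dvd_mul.mp h with h | h
      · exact ha' h
      · exact hb' h
    have heq : φ ^ r * a' * (φ ^ s * b') = φ ^ (r + s) * (a' * b') := by ring
    rw [heq, hwspec _ _ hab', hwspec _ _ ha', hwspec _ _ hb', ← WithTop.coe_add,
      WithTop.coe_eq_coe, ← toLex_add, Prod.mk_add_mk]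
    refine congrArg toLex (Prod.ext ?_ ?_)
    · push_cast; ring
    · exact hmul a' b' ▸ untop'_add (hvne ha') (hvne hb')
  · -- additivity (ultrametric)
    intro a b
    rcases eq_or_ne a 0 with rfl | ha
    · simp
    rcases eq_or_ne b 0 with rfl | hb
    · simp
    rcases eq_or_ne (a + b) 0 with hab | hab
    · rw [hab, hw0]; exact le_top
    obtain ⟨r, a', ha', rfl⟩ := hdecomp a ha
    obtain ⟨s, b', hb', rfl⟩ := hdecomp b hb
    rw [hwspec _ _ ha', hwspec _ _ hb']
    rcases lt_trichotomy r s with hrs | hrs | hrs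
    · -- r < s : the min is w a, and v doesn't drop
      have heq : φ ^ r * a' + φ ^ s * b' = φ ^ r * (a' + φ ^ (s - r) * b') := by
        rw [mul_add, ← mul_assoc, ← pow_add]
        congr 3
        omega
      have ht : φ ∣ φ ^ (s - r) * b' := (dvd_pow_self φ (by omega : s - r ≠ 0)).mul_right b'
      have hc : ¬ φ ∣ (a' + φ ^ (s - r) * b') := by
        intro h
        have h2 : φ ∣ a' := by
          have h3 := dvd_sub h ht
          simpa using h3
        exact ha' h2
      have hvc : v a' ≤ v (a' + φ ^ (s - r) * b') := by
        have h4 := hadd a' (φ ^ (s - r) * b')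
        rw [hvtop ht] at h4
        simpa using h4
      calc min (((toLex ((r : ℤ), WithTop.untopD 0 (v a')) : ℤ ×ₗ ℝ)) : WithTop (ℤ ×ₗ ℝ))
            (((toLex ((s : ℤ), WithTop.untopD 0 (v b')) : ℤ ×ₗ ℝ)) : WithTop (ℤ ×ₗ ℝ))
          ≤ ((toLex ((r : ℤ), WithTop.untopD 0 (v a')) : ℤ ×ₗ ℝ) : WithTop (ℤ ×ₗ ℝ)) := min_le_left _ _
        _ ≤ w (φ ^ r * a' + φ ^ s * b') := by
            rw [heq, hwspec _ _ hc, WithTop.coe_le_coe]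
            refine Prod.Lex.le_iff.mpr (Or.inr ⟨rfl, ?_⟩)
            exact untop'_mono hvc (hvne hc)
    · -- r = s
      subst hrs
      have heq : φ ^ r * a' + φ ^ r * b' = φ ^ r * (a' + b') := by ring
      have hab' : a' + b' ≠ 0 := by
        intro h
        exact hab (by rw [heq, h, mul_zero])
      obtain ⟨k, c, hc, hck⟩ := hdecomp (a' + b') hab'
      have heq2 : φ ^ r * a' + φ ^ r * b' = φ ^ (r + k) * c := by
        rw [heq, hck, pow_add, mul_assoc]
      rw [heq2, hwspec _ _ hc]
      rcases Nat.eq_zero_or_pos k with rfl | hk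
      · -- k = 0 : use hadd
        rw [pow_zero, one_mul] at hck
        rw [min_le_iff]
        rcases le_total (v a') (v b') with hvv | hvv
        · left
          rw [WithTop.coe_le_coe]
          refine Prod.Lex.le_iff.mpr (Or.inr ⟨by norm_num, ?_⟩)
          refine untop'_mono ?_ (hvne hc)
          calc v a' = min (v a') (v b') := (min_eq_left hvv).symm
            _ ≤ v (a' + b') := hadd a' b'
            _ = v c := by rw [hck]
        · right
          rw [WithTop.coe_le_coe]
          refine Prod.Lex.le_iff.mpr (Or.inr ⟨by norm_num, ?_⟩)
          refine untop'_mono ?_ (hvne hc)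
          calc v b' = min (v a') (v b') := (min_eq_right hvv).symm
            _ ≤ v (a' + b') := hadd a' b'
            _ = v c := by rw [hck]
      · -- k > 0 : first coordinate strictly increases
        refine le_trans (min_le_left _ _) ?_
        rw [WithTop.coe_le_coe]
        refine Prod.Lex.le_iff.mpr (Or.inl ?_)
        push_cast [ofLex_toLex]
        omega
    · -- s < r : symmetric
      have heq : φ ^ r * a' + φ ^ s * b' = φ ^ s * (φ ^ (r - s) * a' + b') := by
        rw [mul_add, ← mul_assoc, ← pow_add]
        congr 3
        omega
      have ht : φ ∣ φ ^ (r - s) * a' := (dvd_pow_self φ (by omega : r - s ≠ 0)).mul_right a'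
      have hc : ¬ φ ∣ (φ ^ (r - s) * a' + b') := by
        intro h
        have h2 : φ ∣ b' := by
          have h3 := dvd_sub h ht
          simpa using h3
        exact hb' h2
      have hvc : v b' ≤ v (φ ^ (r - s) * a' + b') := by
        have h4 := hadd (φ ^ (r - s) * a') b'
        rw [hvtop ht] at h4
        simpa using h4
      refine le_trans (min_le_right _ _) ?_
      rw [heq, hwspec _ _ hc, WithTop.coe_le_coe]
      exact Prod.Lex.le_iff.mpr (Or.inr ⟨rfl, untop'_mono hvc (hvne hc)⟩)
  · -- w 1 = 0
    have h1 : ¬ φ ∣ (1 : R) := fun h => hφirr.not_isUnit (isUnit_of_dvd_one h)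
    have := hwspec 0 1 h1
    rw [pow_zero, one_mul] at this
    rw [this, hone]
    rfl
  · -- support
    intro ψ
    constructor
    · intro h
      by_contra hψ
      obtain ⟨r, ψ', hψ', rfl⟩ := hdecomp ψ hψ
      rw [hwspec _ _ hψ'] at h
      exact WithTop.coe_ne_top h
    · intro h; rw [h]; exact hw0
  · -- uniqueness
    intro φ' w' hφ'irr hPspan' hK'
    have hassoc : Associated φ φ' := by
      rw [← Ideal.span_singleton_eq_span_singleton, ← hPspan, ← hPspan']
    obtain ⟨u, hu⟩ := id hassoc
    -- units have valuation 0
    have hvu : ∀ ε : Rˣ, v (ε : R) = 0 := by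
      intro ε
      have h1 : v (ε : R) + v ((ε⁻¹ : Rˣ) : R) = 0 := by
        rw [← hmul]
        simp [hone]
      have h2 := hnonneg ((ε⁻¹ : Rˣ) : R)
      have h3 := hnonneg (ε : R)
      have : v (ε : R) ≤ 0 := by
        calc v (ε : R) = v (ε : R) + 0 := (add_zero _).symm
          _ ≤ v (ε : R) + v ((ε⁻¹ : Rˣ) : R) := add_le_add_right h2 _
          _ = 0 := h1
      exact le_antisymm this h3
    have hpow : ∀ n : ℕ, v (((u⁻¹ : Rˣ) : R) ^ n) = 0 := by
      intro n
      induction n with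
      | zero => simpa using hone
      | succ m ih =>
        rw [pow_succ, hmul, ih, hvu]
        simp
    funext ψ
    rcases eq_or_ne ψ 0 with rfl | hψ
    · rw [hK'.1, hw0]
    obtain ⟨r, ψ', hψ', rfl⟩ := hdecomp ψ hψ
    -- rewrite in terms of φ'
    have hdvd' : ¬ φ' ∣ ((u⁻¹ : Rˣ) : R) ^ r * ψ' := by
      intro h
      have h2 : φ ∣ ((u⁻¹ : Rˣ) : R) ^ r * ψ' := (Associated.dvd_iff_dvd_left hassoc).mpr h
      obtain ⟨c, hc⟩ := h2
      refine hψ' ⟨(u : R) ^ r * c, ?_⟩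
      have h5 := congrArg (fun t => ((u : R)) ^ r * t) hc
      rw [← mul_assoc, ← mul_pow, Units.mul_inv, one_pow, one_mul] at h5
      rw [h5]; ring
    have hu1 : (u : R) ^ r * ((u⁻¹ : Rˣ) : R) ^ r = 1 := by
      rw [← mul_pow, Units.mul_inv, one_pow]
    have heq : φ ^ r * ψ' = φ' ^ r * (((u⁻¹ : Rˣ) : R) ^ r * ψ') := by
      rw [← hu, mul_pow]
      calc φ ^ r * ψ' = φ ^ r * (((u : R) ^ r * ((u⁻¹ : Rˣ) : R) ^ r) * ψ') := by
            rw [hu1, one_mul]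
        _ = φ ^ r * (u : R) ^ r * (((u⁻¹ : Rˣ) : R) ^ r * ψ') := by ring
    have hvinv : v (((u⁻¹ : Rˣ) : R) ^ r * ψ') = v ψ' := by
      rw [hmul, hpow r, zero_add]
    have h1 : w' (φ ^ r * ψ') =
        ((toLex ((r : ℤ), WithTop.untopD 0 (v (((u⁻¹ : Rˣ) : R) ^ r * ψ'))) : ℤ ×ₗ ℝ) :
          WithTop (ℤ ×ₗ ℝ)) := by
      rw [heq]; exact hK'.2 r _ hdvd'
    rw [h1, hvinv]
    exact (hwspec r ψ' hψ').symm
end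

section
/- Let (T,≤) satisfy (T1), (T2), (T4'): smallest element, down-sets order-isomorphic to real intervals, and pairwise infima exist. Then for any nonempty S ⊆ T and fixed τ ∈ S, with Φ_τ: [τ₀, τ] → [a,b] ⊆ ℝ the order isomorphism, the element σ₀ := Φ_τ⁻¹(inf{Φ_τ(τ∧σ) : σ ∈ S}) is the infimum of S in T. -/
/-- in a poset with smallest element, down-sets order-isomorphic
to real intervals and pairwise infima, for nonempty `S` and `τ ∈ S`, with
`Φ_τ : [τ₀,τ] ≃o [a,b] ⊆ ℝ`, the element `σ₀ = Φ_τ⁻¹(inf {Φ_τ(τ∧σ) : σ ∈ S})`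
is the infimum of `S`. -/
theorem infimum_via_interval_isomorphism {T : Type*} [PartialOrder T]
    (τ₀ : T) (hroot : ∀ t : T, τ₀ ≤ t)
    (hI : ∀ τ : T, ∃ s : Set ℝ, s.OrdConnected ∧
      Nonempty ({σ : T // σ ≤ τ} ≃o s))
    (wedge : T → T → T) (hwedge : ∀ a b : T, IsGLB {a, b} (wedge a b))
    (S : Set T) (τ : T) (hτS : τ ∈ S)
    (a b : ℝ) (Φ : {σ : T // σ ≤ τ} ≃o Set.Icc a b)
    (σ₀ : T) (hσ₀ : σ₀ ≤ τ)
    (hval : (Φ ⟨σ₀, hσ₀⟩ : ℝ) =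
      sInf {c : ℝ | ∃ σ ∈ S,
        ((Φ ⟨wedge τ σ, (hwedge τ σ).1 (Set.mem_insert τ {σ})⟩ : ℝ) = c)}) :
    IsGLB S σ₀ := by
  set C := {c : ℝ | ∃ σ ∈ S,
      ((Φ ⟨wedge τ σ, (hwedge τ σ).1 (Set.mem_insert τ {σ})⟩ : ℝ) = c)} with hCdef
  have hne : C.Nonempty := ⟨_, τ, hτS, rfl⟩
  have hbdd : BddBelow C := by
    refine ⟨a, ?_⟩
    rintro c ⟨σ, hσ, rfl⟩
    exact (Φ _).2.1
  constructor
  · intro σ hσ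
    have hmem : ((Φ ⟨wedge τ σ, (hwedge τ σ).1 (Set.mem_insert τ {σ})⟩ : ℝ)) ∈ C :=
      ⟨σ, hσ, rfl⟩
    have hle : (Φ ⟨σ₀, hσ₀⟩ : ℝ) ≤
        (Φ ⟨wedge τ σ, (hwedge τ σ).1 (Set.mem_insert τ {σ})⟩ : ℝ) := by
      rw [hval]; exact csInf_le hbdd hmem
    have h1 : σ₀ ≤ wedge τ σ :=
      Subtype.mk_le_mk.mp (Φ.le_iff_le.mp (Subtype.coe_le_coe.mp hle))
    exact h1.trans ((hwedge τ σ).1 (by simp))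
  · intro x hx
    have hxτ : x ≤ τ := hx hτS
    have key : ∀ c ∈ C, (Φ ⟨x, hxτ⟩ : ℝ) ≤ c := by
      rintro c ⟨σ, hσ, rfl⟩
      have hxw : x ≤ wedge τ σ := (hwedge τ σ).2 (by
        rintro y (rfl | rfl)
        exacts [hxτ, hx hσ])
      exact Subtype.coe_le_coe.mpr (Φ.le_iff_le.mpr (Subtype.mk_le_mk.mpr hxw))
    have hle : (Φ ⟨x, hxτ⟩ : ℝ) ≤ (Φ ⟨σ₀, hσ₀⟩ : ℝ) := by
      rw [hval]; exact le_csInf hne key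
    exact Subtype.mk_le_mk.mp (Φ.le_iff_le.mp (Subtype.coe_le_coe.mp hle))
end
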